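/- Let φ_x be the density of U·x + U·(1−U) for U uniform on [0,1], and let r(t) = (1/2)·1_{[0,1/4)}(t). Then for every x ∈ [0,1], the function g_x := φ_x − r is nonnegative on [0,1] with ∫₀¹ g_x(t) dt = 7/8, and the cumulative distribution function of the normalized density g_x/(7/8) is G_x(y) = (8/7)·(F_x(y) − (1/2)·min(y, 1/4)) for y ∈ [0,1], where F_x is the distribution function of U·x + U·(1−U). -/

import Mathlib

open MeasureTheory

/-- The density `φ_x(t) = ((1+x)² − 4t)^{−1/2} · (1_{[0,x)}(t) + 2·1_{[x,b_x)}(t))`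
with `b_x = ((1+x)/2)²`. -/
noncomputable def phi (x t : ℝ) : ℝ :=
  ((1 + x) ^ 2 - 4 * t) ^ (-(1:ℝ) / 2) *
    (Set.indicator (Set.Ico (0:ℝ) x) 1 t
      + 2 * Set.indicator (Set.Ico x (((1 + x) / 2) ^ 2)) 1 t)

/-- `r(t) = (1/2)·1_{[0,1/4)}(t)`. -/
noncomputable def r (t : ℝ) : ℝ := (1 / 2) * Set.indicator (Set.Ico (0:ℝ) (1 / 4)) 1 t

/-- The distribution function `F_x` of `U·x + U·(1−U)` for `U` uniform on `[0,1]`. -/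
noncomputable def F (x y : ℝ) : ℝ :=
  if y < x then (1 + x - Real.sqrt ((1 + x) ^ 2 - 4 * y)) / 2
  else if y < ((1 + x) / 2) ^ 2 then 1 - Real.sqrt ((1 + x) ^ 2 - 4 * y)
  else 1

/-- `G_x(y) = (8/7)·(F_x(y) − (1/2)·min(y, 1/4))`. -/
noncomputable def G (x y : ℝ) : ℝ := 8 / 7 * (F x y - (1 / 2) * min y (1 / 4))

namespace ResidualAux

lemma L1 {f : ℝ → ℝ} {a b u v : ℝ} (hua : u ≤ a) (hbv : b ≤ v) (hab : a ≤ b) :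
    ∫ t in a..b, Set.indicator (Set.Ico u v) f t = ∫ t in a..b, f t := by
  apply intervalIntegral.integral_congr_ae
  have hv : ∀ᵐ t : ℝ, t ≠ v := by rw [ae_iff]; simpa using measure_singleton v
  filter_upwards [hv] with t ht hmem
  rw [Set.uIoc_of_le hab] at hmem
  exact Set.indicator_of_mem
    (Set.mem_Ico.mpr ⟨le_trans hua hmem.1.le, lt_of_le_of_ne (le_trans hmem.2 hbv) ht⟩) f

lemma L2 {f : ℝ → ℝ} {a b u v : ℝ} (hab : a ≤ b) (h : b ≤ u ∨ v ≤ a) :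
    ∫ t in a..b, Set.indicator (Set.Ico u v) f t = 0 := by
  rw [show (0:ℝ) = ∫ _ in a..b, (0:ℝ) from by simp]
  apply intervalIntegral.integral_congr_ae
  have hv : ∀ᵐ t : ℝ, t ≠ u := by rw [ae_iff]; simpa using measure_singleton u
  filter_upwards [hv] with t ht hmem
  rw [Set.uIoc_of_le hab] at hmem
  apply Set.indicator_of_notMem
  rcases h with h | h
  · exact fun hm => absurd (le_antisymm (le_trans hmem.2 h) hm.1).symm ht.symm
  · exact fun hm => absurd (lt_of_lt_of_le hm.2 (le_trans h hmem.1.le)) (lt_irrefl t)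

lemma ind_intble {f : ℝ → ℝ} {a b : ℝ} (hf : IntervalIntegrable f volume a b) (u v : ℝ) :
    IntervalIntegrable (Set.indicator (Set.Ico u v) f) volume a b :=
  ⟨hf.1.indicator measurableSet_Ico, hf.2.indicator measurableSet_Ico⟩

set_option maxHeartbeats 800000 in
lemma h_intble (x a b : ℝ) :
    IntervalIntegrable (fun t => ((1+x)^2 - 4*t)^(-(1:ℝ)/2)) volume a b := by
  have base : ∀ a b : ℝ, IntervalIntegrable (fun u : ℝ => u ^ (-(1:ℝ)/2)) volume a b :=
    fun a b => intervalIntegral.intervalIntegrable_rpow' (by norm_num)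
  have s1 : ∀ a b : ℝ, IntervalIntegrable (fun t : ℝ => ((1+x)^2 - t)^(-(1:ℝ)/2)) volume a b := by
    intro a b
    have h := (base ((1+x)^2 - a) ((1+x)^2 - b)).comp_sub_left ((1+x)^2)
    simp only [sub_sub_cancel] at h
    exact h
  have h := (s1 (4*a) (4*b)).comp_mul_left (c := 4)
  have e1 : 4*a/4 = a := by ring
  have e2 : 4*b/4 = b := by ring
  rw [e1, e2] at h
  exact h

lemma integral_h (x a b : ℝ) : ∫ t in a..b, ((1+x)^2 - 4*t)^(-(1:ℝ)/2)
    = (Real.sqrt ((1+x)^2-4*a) - Real.sqrt ((1+x)^2-4*b))/2 := by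
  simp only [show ∀ t:ℝ, (1+x)^2 - 4*t = (-4)*t + (1+x)^2 from fun t => by ring]
  rw [intervalIntegral.integral_comp_mul_add (fun u:ℝ => u ^ (-(1:ℝ)/2)) (by norm_num) ((1+x)^2),
    integral_rpow (Or.inl (by norm_num))]
  rw [show (-(1:ℝ)/2 + 1) = 1/2 by norm_num, ← Real.sqrt_eq_rpow, ← Real.sqrt_eq_rpow,
    show (-4:ℝ)*b + (1+x)^2 = (1+x)^2 - 4*b from by ring,
    show (-4:ℝ)*a + (1+x)^2 = (1+x)^2 - 4*a from by ring, smul_eq_mul]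
  ring

lemma phi_eq (x t : ℝ) : phi x t =
    Set.indicator (Set.Ico (0:ℝ) x) (fun t => ((1+x)^2-4*t)^(-(1:ℝ)/2)) t
    + Set.indicator (Set.Ico x (((1+x)/2)^2)) (fun t => 2*((1+x)^2-4*t)^(-(1:ℝ)/2)) t := by
  unfold phi
  by_cases h1 : t ∈ Set.Ico (0:ℝ) x <;> by_cases h2 : t ∈ Set.Ico x (((1+x)/2)^2) <;>
    simp [Set.indicator_of_mem, Set.indicator_of_notMem, h1, h2] <;> ring

lemma phi_intble (x a b : ℝ) : IntervalIntegrable (phi x) volume a b := by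
  have : phi x = (fun t => Set.indicator (Set.Ico (0:ℝ) x)
        (fun t => ((1+x)^2-4*t)^(-(1:ℝ)/2)) t
      + Set.indicator (Set.Ico x (((1+x)/2)^2)) (fun t => 2*((1+x)^2-4*t)^(-(1:ℝ)/2)) t) :=
    funext (phi_eq x)
  rw [this]
  exact (ind_intble (h_intble x a b) _ _).add (ind_intble ((h_intble x a b).const_mul 2) _ _)

lemma r_eq (t : ℝ) : r t = Set.indicator (Set.Ico (0:ℝ) (1/4)) (fun _ => (1/2:ℝ)) t := by
  unfold r
  by_cases h : t ∈ Set.Ico (0:ℝ) (1/4)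
  · rw [Set.indicator_of_mem h, Set.indicator_of_mem h, Pi.one_apply, mul_one]
  · rw [Set.indicator_of_notMem h, Set.indicator_of_notMem h, mul_zero]

lemma r_intble (a b : ℝ) : IntervalIntegrable r volume a b := by
  have : r = fun t => Set.indicator (Set.Ico (0:ℝ) (1/4)) (fun _ => (1/2:ℝ)) t := funext r_eq
  rw [this]
  exact ind_intble intervalIntegrable_const _ _

lemma rpow_neg_half_nonneg (u : ℝ) : 0 ≤ u ^ (-(1:ℝ)/2) := by
  rcases le_or_gt 0 u with h | h
  · exact Real.rpow_nonneg h _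
  · rw [Real.rpow_def_of_neg h,
     show (-(1:ℝ)/2 * Real.pi) = -(Real.pi/2) by ring, Real.cos_neg, Real.cos_pi_div_two,
      mul_zero]

lemma four_rpow : (4:ℝ) ^ (-(1:ℝ)/2) = 1/2 := by
  rw [show (4:ℝ) = 2^(2:ℕ) by norm_num, ← Real.rpow_natCast (2:ℝ) 2,
    ← Real.rpow_mul (by norm_num : (0:ℝ) ≤ 2)]
  norm_num [Real.rpow_neg_one]

end ResidualAux

open ResidualAux in
set_option maxHeartbeats 1600000 in
/-- For `x ∈ [0,1]`, `g_x := φ_x − r` is nonnegative on `[0,1]`, has total integral `7/8`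
over `[0,1]`, and the distribution function of the normalized density `g_x/(7/8)` is
`G_x(y) = (8/7)·(F_x(y) − (1/2)·min(y, 1/4))`. -/
theorem residual_density (x : ℝ) (hx : x ∈ Set.Icc (0:ℝ) 1) :
    (∀ t ∈ Set.Icc (0:ℝ) 1, 0 ≤ phi x t - r t) ∧
    (∫ t in (0:ℝ)..1, (phi x t - r t)) = 7 / 8 ∧
    (∀ y ∈ Set.Icc (0:ℝ) 1, (∫ t in (0:ℝ)..y, (phi x t - r t) / (7 / 8)) = G x y) := by
  obtain ⟨hx0, hx1⟩ := hx
  set b : ℝ := ((1+x)/2)^2 with hb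
  have hxb : x ≤ b := by rw [hb]; nlinarith
  have hb1 : b ≤ 1 := by rw [hb]; nlinarith
  have hb4 : (1:ℝ)/4 ≤ b := by rw [hb]; nlinarith
  have hsqc : Real.sqrt ((1+x)^2 - 4*0) = 1 + x := by
    rw [show (1+x)^2 - 4*0 = (1+x)^2 by ring, Real.sqrt_sq (by linarith)]
  have hsqx : Real.sqrt ((1+x)^2 - 4*x) = 1 - x := by
    rw [show (1+x)^2 - 4*x = (1-x)^2 by ring, Real.sqrt_sq (by linarith)]
  have hsqb : Real.sqrt ((1+x)^2 - 4*b) = 0 := by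
    rw [show (1+x)^2 - 4*b = 0 by rw [hb]; ring, Real.sqrt_zero]
  -- piecewise integrals of phi
  have P1 : ∫ t in (0:ℝ)..x, phi x t = x := by
    simp only [phi_eq]
    rw [intervalIntegral.integral_add (ind_intble (h_intble x 0 x) _ _)
        (ind_intble ((h_intble x 0 x).const_mul 2) _ _),
      L1 le_rfl le_rfl hx0, L2 hx0 (Or.inl le_rfl), integral_h, hsqc, hsqx]
    ring
  have P2 : ∀ y, x ≤ y → y ≤ b →
      ∫ t in x..y, phi x t = (1 - x) - Real.sqrt ((1+x)^2 - 4*y) := by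
    intro y hxy hyb
    simp only [phi_eq]
    rw [intervalIntegral.integral_add (ind_intble (h_intble x x y) _ _)
        (ind_intble ((h_intble x x y).const_mul 2) _ _),
      L2 hxy (Or.inr le_rfl), L1 le_rfl hyb hxy, intervalIntegral.integral_const_mul,
      integral_h, hsqx]
    ring
  have P3 : ∀ y, b ≤ y → ∫ t in b..y, phi x t = 0 := by
    intro y hby
    simp only [phi_eq]
    rw [intervalIntegral.integral_add (ind_intble (h_intble x b y) _ _)
        (ind_intble ((h_intble x b y).const_mul 2) _ _),
      L2 hby (Or.inr hxb), L2 hby (Or.inr le_rfl)]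
    norm_num
  -- CDF of phi
  have key : ∀ y, 0 ≤ y → y ≤ 1 → ∫ t in (0:ℝ)..y, phi x t = F x y := by
    intro y hy0 hy1
    by_cases h1 : y < x
    · rw [F, if_pos h1]
      simp only [phi_eq]
      rw [intervalIntegral.integral_add (ind_intble (h_intble x 0 y) _ _)
          (ind_intble ((h_intble x 0 y).const_mul 2) _ _),
        L1 le_rfl h1.le hy0, L2 hy0 (Or.inl h1.le), integral_h, hsqc]
      ring
    · push_neg at h1
      by_cases h2 : y < b
      · rw [F, if_neg (not_lt.mpr h1), if_pos h2,
          ← intervalIntegral.integral_add_adjacent_intervals (phi_intble x 0 x)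
            (phi_intble x x y), P1, P2 y h1 h2.le]
        ring
      · push_neg at h2
        rw [F, if_neg (not_lt.mpr h1), if_neg (not_lt.mpr h2),
          ← intervalIntegral.integral_add_adjacent_intervals (phi_intble x 0 b)
            (phi_intble x b y),
          ← intervalIntegral.integral_add_adjacent_intervals (phi_intble x 0 x)
            (phi_intble x x b), P1, P2 b hxb le_rfl, P3 y h2, hsqb]
        ring
  -- CDF of r
  have key_r : ∀ y, 0 ≤ y → ∫ t in (0:ℝ)..y, r t = 1/2 * min y (1/4) := by
    intro y hy0
    simp only [r_eq]
    rcases le_or_gt y (1/4) with h | h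
    · rw [L1 le_rfl h hy0, intervalIntegral.integral_const, min_eq_left h, smul_eq_mul]
      ring
    · have i1 : IntervalIntegrable
          (Set.indicator (Set.Ico (0:ℝ) (1/4)) (fun _ => (1/2:ℝ))) volume 0 (1/4) :=
        ind_intble intervalIntegrable_const 0 (1/4)
      have i2 : IntervalIntegrable
          (Set.indicator (Set.Ico (0:ℝ) (1/4)) (fun _ => (1/2:ℝ))) volume (1/4) y :=
        ind_intble intervalIntegrable_const 0 (1/4)
      rw [← intervalIntegral.integral_add_adjacent_intervals i1 i2,
        L1 le_rfl le_rfl (by norm_num : (0:ℝ) ≤ 1/4), L2 h.le (Or.inr le_rfl),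
        intervalIntegral.integral_const, min_eq_right h.le, smul_eq_mul]
      norm_num
  -- combined integral
  have int_sub : ∀ y, 0 ≤ y → y ≤ 1 →
      ∫ t in (0:ℝ)..y, (phi x t - r t) = F x y - 1/2 * min y (1/4) := by
    intro y hy0 hy1
    rw [intervalIntegral.integral_sub (phi_intble x 0 y) (r_intble 0 y), key y hy0 hy1,
      key_r y hy0]
  have hF1 : F x 1 = 1 := by
    rw [F, if_neg (not_lt.mpr hx1), if_neg (not_lt.mpr hb1)]
  refine ⟨?_, ?_, ?_⟩
  · -- nonnegativity
    intro t ht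
    obtain ⟨ht0, ht1⟩ := ht
    have hnn : ∀ s : ℝ, 0 ≤ phi x s := by
      intro s
      apply mul_nonneg (rpow_neg_half_nonneg _)
      have i1 : (0:ℝ) ≤ Set.indicator (Set.Ico (0:ℝ) x) 1 s :=
        Set.indicator_nonneg (fun _ _ => zero_le_one) s
      have i2 : (0:ℝ) ≤ Set.indicator (Set.Ico x b) 1 s :=
        Set.indicator_nonneg (fun _ _ => zero_le_one) s
      rw [← hb]
      linarith
    by_cases hq : t < 1/4
    · have hr : r t = 1/2 := by
        rw [r, Set.indicator_of_mem (Set.mem_Ico.mpr ⟨ht0, hq⟩)]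
        norm_num
      have hbound : ∀ s:ℝ, 0 ≤ s → 0 < (1+x)^2 - 4*s → (1:ℝ)/2 ≤ ((1+x)^2 - 4*s) ^ (-(1:ℝ)/2) := by
        intro s hs0 hs
        have h4 : (1+x)^2 - 4*s ≤ 4 := by nlinarith
        calc (1:ℝ)/2 = (4:ℝ) ^ (-(1:ℝ)/2) := four_rpow.symm
          _ ≤ ((1+x)^2 - 4*s) ^ (-(1:ℝ)/2) :=
            Real.rpow_le_rpow_of_nonpos hs h4 (by norm_num)
      by_cases htx : t < x
      · have : phi x t = ((1+x)^2 - 4*t) ^ (-(1:ℝ)/2) := by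
          rw [phi, Set.indicator_of_mem (Set.mem_Ico.mpr ⟨ht0, htx⟩),
            Set.indicator_of_notMem (fun hm => absurd hm.1 (not_le.mpr htx))]
          norm_num
        rw [this, hr]
        have := hbound t ht0 (by nlinarith)
        linarith
      · push_neg at htx
        have htb : t < b := lt_of_lt_of_le hq hb4
        have : phi x t = 2 * ((1+x)^2 - 4*t) ^ (-(1:ℝ)/2) := by
          rw [phi, Set.indicator_of_notMem (fun hm => absurd htx (not_le.mpr hm.2)),
            Set.indicator_of_mem (Set.mem_Ico.mpr ⟨htx, htb⟩)]
          norm_num; ring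
        rw [this, hr]
        have := hbound t ht0 (by nlinarith)
        linarith
    · have hr : r t = 0 := by
        rw [r, Set.indicator_of_notMem (fun hm => absurd hm.2 hq)]
        norm_num
      rw [hr]
      simpa using hnn t
  · rw [int_sub 1 (by norm_num) le_rfl, hF1]
    norm_num
  · intro y hy
    obtain ⟨hy0, hy1⟩ := hy
    rw [intervalIntegral.integral_div, int_sub y hy0 hy1, G]
    ring
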